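/- For every fixed n ≥ 1, the survivors of the first n stages of the model sieve have natural density d n = ∏_{i=1}^{n} (1 − 1/(x i)); that is, L n t / t tends to ∏_{i=1}^{n} (1 − 1/(x i)) as t → ∞ (as real numbers). -/

import Mathlib

/-- `gx x` is the 0-indexed strictly increasing enumeration of `{k : ℕ | k % x ≠ 1}`. -/
noncomputable def gx (x : ℕ) : ℕ → ℕ := Nat.nth (fun k => k % x ≠ 1)

/-- `modelF n` is the 0-indexed strictly increasing enumeration of the integers surviving
`n` stages of the model sieve:  `modelF 0 k = k + 1` and
`modelF (n+1) k = modelF n (gx (modelX (n+1)) k)` where `modelX (n+1) = modelF n 1`. -/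
noncomputable def modelF : ℕ → ℕ → ℕ
  | 0, k => k + 1
  | n + 1, k => modelF n (gx (modelF n 1) k)

/-- `modelX n` is the `n`-th model prime (`modelX 1 = 2, modelX 2 = 3, modelX 3 = 5, ...`). -/
noncomputable def modelX (n : ℕ) : ℕ := modelF (n - 1) 1

/-- `Lcount n t` is the number of survivors of the first `n` stages of the model sieve
that are `≤ t`. -/
noncomputable def Lcount (n t : ℕ) : ℕ := Set.ncard {k : ℕ | modelF n k ≤ t}

/- ---------- auxiliary lemmas about `gx` ---------- -/

lemma gx_set_infinite {x : ℕ} (hx : 2 ≤ x) : {k : ℕ | k % x ≠ 1}.Infinite := by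
  apply Set.infinite_of_injective_forall_mem (f := fun m : ℕ => x * m)
  · intro a b h
    exact Nat.eq_of_mul_eq_mul_left (by omega) h
  · intro m
    simp only [Set.mem_setOf_eq, Nat.mul_mod_right]
    omega

lemma gx_strictMono {x : ℕ} (hx : 2 ≤ x) : StrictMono (gx x) :=
  Nat.nth_strictMono (gx_set_infinite hx)

lemma gx_zero (x : ℕ) : gx x 0 = 0 := by
  rw [gx, Nat.nth_zero, Nat.sInf_eq_zero]
  left
  simp only [Set.mem_setOf_eq, Nat.zero_mod]
  omega

lemma count_base {x : ℕ} (hx : 2 ≤ x) : Nat.count (fun k => k % x ≠ 1) x = x - 1 := by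
  rw [Nat.count_eq_card_filter_range]
  have h1 : Finset.filter (fun k => k % x ≠ 1) (Finset.range x)
      = Finset.filter (fun k => k ≠ 1) (Finset.range x) := by
    apply Finset.filter_congr
    intro k hk
    rw [Nat.mod_eq_of_lt (Finset.mem_range.mp hk)]
  rw [h1, Finset.filter_ne', Finset.card_erase_of_mem (Finset.mem_range.mpr (by omega)),
    Finset.card_range]

lemma count_periodic {x : ℕ} (hx : 2 ≤ x) (m : ℕ) :
    Nat.count (fun k => k % x ≠ 1) (m + x) = Nat.count (fun k => k % x ≠ 1) m + (x - 1) := by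
  induction m with
  | zero => simp [count_base hx]
  | succ m ih =>
      have : m + 1 + x = (m + x) + 1 := by omega
      rw [this, Nat.count_succ, ih, Nat.count_succ]
      have : (m + x) % x = m % x := Nat.add_mod_right m x
      simp only [this]
      by_cases h : m % x ≠ 1 <;> simp [h] <;> omega

lemma gx_periodic {x : ℕ} (hx : 2 ≤ x) (k : ℕ) :
    gx x (k + (x - 1)) = gx x k + x := by
  have hinf := gx_set_infinite hx
  have hpm : (gx x k) % x ≠ 1 := Nat.nth_mem_of_infinite hinf k
  have hc : Nat.count (fun k => k % x ≠ 1) (gx x k) = k := Nat.count_nth_of_infinite hinf k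
  have hpm2 : (gx x k + x) % x ≠ 1 := by rwa [Nat.add_mod_right]
  have := Nat.nth_count (p := fun k => k % x ≠ 1) hpm2
  rwa [count_periodic hx, hc] at this

lemma iter_period {A : ℕ → ℕ} {q p : ℕ} (h : ∀ k, A (k + q) = A k + p) :
    ∀ m k, A (k + m * q) = A k + m * p := by
  intro m
  induction m with
  | zero => simp
  | succ m ih =>
      intro k
      have e1 : k + (m + 1) * q = (k + m * q) + q := by ring
      rw [e1, h, ih]
      ring

/- ---------- the period and the count of survivors per period ---------- -/

noncomputable def Pp : ℕ → ℕ
  | 0 => 1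
  | n + 1 => Pp n * modelX (n + 1)

noncomputable def Qq : ℕ → ℕ
  | 0 => 1
  | n + 1 => Qq n * (modelX (n + 1) - 1)

lemma modelF_props (n : ℕ) :
    StrictMono (modelF n) ∧ modelF n 0 = 1 ∧
      ∀ k, modelF n (k + Qq n) = modelF n k + Pp n := by
  induction n with
  | zero =>
      refine ⟨fun a b h => by simpa [modelF] using h, rfl, fun k => by simp [modelF, Qq, Pp]⟩
  | succ n ih =>
      obtain ⟨hsm, h0, hper⟩ := ih
      have hX : modelX (n + 1) = modelF n 1 := by simp [modelX]
      have hx2 : 2 ≤ modelF n 1 := by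
        have := hsm (show (0:ℕ) < 1 by norm_num)
        omega
      refine ⟨?_, ?_, ?_⟩
      · intro a b h
        exact hsm (gx_strictMono hx2 h)
      · show modelF n (gx (modelF n 1) 0) = 1
        rw [gx_zero, h0]
      · intro k
        show modelF n (gx (modelF n 1) (k + Qq (n+1))) = modelF n (gx (modelF n 1) k) + Pp (n+1)
        have hQ : Qq (n + 1) = Qq n * (modelF n 1 - 1) := by rw [Qq, hX]
        have hP : Pp (n + 1) = Pp n * modelF n 1 := by rw [Pp, hX]
        have e1 : gx (modelF n 1) (k + Qq n * (modelF n 1 - 1))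
            = gx (modelF n 1) k + Qq n * modelF n 1 :=
          iter_period (gx_periodic hx2) (Qq n) k
        have e2 : modelF n (gx (modelF n 1) k + modelF n 1 * Qq n)
            = modelF n (gx (modelF n 1) k) + modelF n 1 * Pp n :=
          iter_period hper (modelF n 1) _
        rw [hQ, e1, hP]
        rw [show Qq n * modelF n 1 = modelF n 1 * Qq n from Nat.mul_comm _ _, e2]
        ring

lemma modelX_two_le {i : ℕ} (hi : 1 ≤ i) : 2 ≤ modelX i := by
  obtain ⟨hsm, h0, -⟩ := modelF_props (i - 1)
  have := hsm (show (0:ℕ) < 1 by norm_num)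
  rw [h0] at this
  exact this

lemma Pp_eq_prod (n : ℕ) : Pp n = ∏ i ∈ Finset.Icc 1 n, modelX i := by
  induction n with
  | zero => simp [Pp]
  | succ n ih => rw [Pp, ih, Finset.prod_Icc_succ_top (by omega)]

lemma Qq_eq_prod (n : ℕ) : Qq n = ∏ i ∈ Finset.Icc 1 n, (modelX i - 1) := by
  induction n with
  | zero => simp [Qq]
  | succ n ih => rw [Qq, ih, Finset.prod_Icc_succ_top (by omega)]

lemma Pp_pos (n : ℕ) : 0 < Pp n := by
  induction n with
  | zero => simp [Pp]
  | succ n ih =>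
      have := modelX_two_le (i := n + 1) (by omega)
      rw [Pp]; positivity

lemma Qq_pos (n : ℕ) : 0 < Qq n := by
  induction n with
  | zero => simp [Qq]
  | succ n ih =>
      have := modelX_two_le (i := n + 1) (by omega)
      rw [Qq]
      exact Nat.mul_pos ih (by omega)

/- ---------- counting ---------- -/

lemma Lcount_bounds (n t : ℕ) (ht : 1 ≤ t) :
    Qq n * ((t - 1) / Pp n) + 1 ≤ Lcount n t ∧
      Lcount n t ≤ ((t - 1) / Pp n + 1) * Qq n := by
  obtain ⟨hsm, h0, hper⟩ := modelF_props n
  set m := (t - 1) / Pp n with hm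
  have hval : ∀ j : ℕ, modelF n (j * Qq n) = 1 + j * Pp n := by
    intro j
    have := iter_period hper j 0
    simpa [h0] using this
  have hle : m * Pp n ≤ t - 1 := Nat.div_mul_le_self _ _
  have hlt : t - 1 < (m + 1) * Pp n := (Nat.div_lt_iff_lt_mul (Pp_pos n)).mp (Nat.lt_succ_self m)
  have hsub1 : Set.Iic (m * Qq n) ⊆ {k : ℕ | modelF n k ≤ t} := by
    intro k hk
    have h1 : modelF n k ≤ modelF n (m * Qq n) := hsm.monotone hk
    rw [hval] at h1
    simp only [Set.mem_setOf_eq]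
    omega
  have hsub2 : {k : ℕ | modelF n k ≤ t} ⊆ Set.Iio ((m + 1) * Qq n) := by
    intro k hk
    simp only [Set.mem_setOf_eq] at hk
    have h2 : modelF n k < modelF n ((m + 1) * Qq n) := by
      rw [hval]; omega
    exact hsm.lt_iff_lt.mp h2
  have hfin : {k : ℕ | modelF n k ≤ t}.Finite :=
    Set.Finite.subset (Set.finite_Iio _) hsub2
  constructor
  · have h3 : (Set.Iic (m * Qq n)).ncard ≤ Lcount n t :=
      Set.ncard_le_ncard hsub1 hfin
    rwa [← Finset.coe_Iic, Set.ncard_coe_finset, Nat.card_Iic, Nat.mul_comm] at h3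
  · have h4 : Lcount n t ≤ (Set.Iio ((m + 1) * Qq n)).ncard :=
      Set.ncard_le_ncard hsub2 (Set.finite_Iio _)
    rwa [← Finset.coe_Iio, Set.ncard_coe_finset, Nat.card_Iio] at h4

/-- The survivors of the first `n` stages of the model sieve have natural density
`d n = ∏_{i=1}^{n} (1 - 1/(x i))`. -/
theorem model_sieve_density (n : ℕ) (hn : 1 ≤ n) :
    Filter.Tendsto (fun t : ℕ => (Lcount n t : ℝ) / t) Filter.atTop
      (nhds (∏ i ∈ Finset.Icc 1 n, (1 - 1 / (modelX i : ℝ)))) := by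
  have hP : (0:ℝ) < (Pp n : ℝ) := by exact_mod_cast Pp_pos n
  have hQ : (0:ℝ) < (Qq n : ℝ) := by exact_mod_cast Qq_pos n
  have hprod : ∏ i ∈ Finset.Icc 1 n, (1 - 1 / (modelX i : ℝ)) = (Qq n : ℝ) / (Pp n : ℝ) := by
    rw [Qq_eq_prod, Pp_eq_prod, Nat.cast_prod, Nat.cast_prod, ← Finset.prod_div_distrib]
    apply Finset.prod_congr rfl
    intro i hi
    have h2 : 2 ≤ modelX i := modelX_two_le (Finset.mem_Icc.mp hi).1
    have hx0 : (modelX i : ℝ) ≠ 0 := by positivity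
    rw [Nat.cast_sub (by omega), Nat.cast_one]
    field_simp
  rw [hprod]
  have hzero : Filter.Tendsto (fun t : ℕ => (Qq n : ℝ) / (t : ℝ)) Filter.atTop (nhds 0) :=
    Filter.Tendsto.div_atTop tendsto_const_nhds tendsto_natCast_atTop_atTop
  have hlow : Filter.Tendsto (fun t : ℕ => (Qq n : ℝ) / (Pp n : ℝ) - (Qq n : ℝ) / (t : ℝ))
      Filter.atTop (nhds ((Qq n : ℝ) / (Pp n : ℝ))) := by
    simpa using (tendsto_const_nhds (x := (Qq n : ℝ) / (Pp n : ℝ)) (f := Filter.atTop)).sub hzero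
  have hhigh : Filter.Tendsto (fun t : ℕ => (Qq n : ℝ) / (Pp n : ℝ) + (Qq n : ℝ) / (t : ℝ))
      Filter.atTop (nhds ((Qq n : ℝ) / (Pp n : ℝ))) := by
    simpa using (tendsto_const_nhds (x := (Qq n : ℝ) / (Pp n : ℝ)) (f := Filter.atTop)).add hzero
  apply tendsto_of_tendsto_of_tendsto_of_le_of_le' hlow hhigh
  · filter_upwards [Filter.eventually_ge_atTop 1] with t ht
    obtain ⟨hA, hB⟩ := Lcount_bounds n t ht
    set m := (t - 1) / Pp n with hm
    have hlt : t - 1 < (m + 1) * Pp n := (Nat.div_lt_iff_lt_mul (Pp_pos n)).mp (Nat.lt_succ_self m)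
    have hlt' : t - 1 < m * Pp n + Pp n := by rw [add_one_mul] at hlt; exact hlt
    have htle : t ≤ m * Pp n + Pp n := by omega
    have hT : (0:ℝ) < (t : ℝ) := by exact_mod_cast ht
    have h1 : (Qq n : ℝ) * (m : ℝ) + 1 ≤ (Lcount n t : ℝ) := by exact_mod_cast hA
    have h2 : (t : ℝ) ≤ (m : ℝ) * (Pp n : ℝ) + (Pp n : ℝ) := by exact_mod_cast htle
    have k1 : (Qq n : ℝ) * (t : ℝ) ≤ (Qq n : ℝ) * ((m : ℝ) * (Pp n : ℝ) + (Pp n : ℝ)) :=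
      mul_le_mul_of_nonneg_left h2 hQ.le
    have k2 : ((Qq n : ℝ) * (m : ℝ) + 1) * (Pp n : ℝ) ≤ (Lcount n t : ℝ) * (Pp n : ℝ) :=
      mul_le_mul_of_nonneg_right h1 hP.le
    have key : (Qq n : ℝ) * (t : ℝ) ≤ ((Lcount n t : ℝ) + (Qq n : ℝ)) * (Pp n : ℝ) := by
      nlinarith [k1, k2, hP.le]
    have h3 : (Qq n : ℝ) / (Pp n : ℝ) ≤ ((Lcount n t : ℝ) + (Qq n : ℝ)) / (t : ℝ) :=
      (div_le_div_iff₀ hP hT).mpr key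
    rw [add_div] at h3
    linarith
  · filter_upwards [Filter.eventually_ge_atTop 1] with t ht
    obtain ⟨hA, hB⟩ := Lcount_bounds n t ht
    set m := (t - 1) / Pp n with hm
    have hle : m * Pp n ≤ t - 1 := Nat.div_mul_le_self _ _
    have hle' : m * Pp n ≤ t := le_trans hle (Nat.sub_le _ _)
    have hT : (0:ℝ) < (t : ℝ) := by exact_mod_cast ht
    have h1 : (Lcount n t : ℝ) ≤ ((m : ℝ) + 1) * (Qq n : ℝ) := by exact_mod_cast hB
    have h2 : (m : ℝ) * (Pp n : ℝ) ≤ (t : ℝ) := by exact_mod_cast hle'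
    have k1 : (Lcount n t : ℝ) * ((Pp n : ℝ) * (t : ℝ))
        ≤ (((m : ℝ) + 1) * (Qq n : ℝ)) * ((Pp n : ℝ) * (t : ℝ)) :=
      mul_le_mul_of_nonneg_right h1 (by positivity)
    have k2 : ((m : ℝ) * (Pp n : ℝ)) * ((Qq n : ℝ) * (t : ℝ))
        ≤ (t : ℝ) * ((Qq n : ℝ) * (t : ℝ)) :=
      mul_le_mul_of_nonneg_right h2 (by positivity)
    have key : (Lcount n t : ℝ) * ((Pp n : ℝ) * (t : ℝ))
        ≤ ((Qq n : ℝ) * ((t : ℝ) + (Pp n : ℝ))) * (t : ℝ) := by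
      nlinarith [k1, k2]
    have h3 : (Lcount n t : ℝ) / (t : ℝ)
        ≤ ((Qq n : ℝ) * ((t : ℝ) + (Pp n : ℝ))) / ((Pp n : ℝ) * (t : ℝ)) :=
      (div_le_div_iff₀ hT (by positivity)).mpr key
    have h4 : ((Qq n : ℝ) * ((t : ℝ) + (Pp n : ℝ))) / ((Pp n : ℝ) * (t : ℝ))
        = (Qq n : ℝ) / (Pp n : ℝ) + (Qq n : ℝ) / (t : ℝ) := by
      field_simp
    linarith [h4 ▸ h3]
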